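/- arXiv:2006.02918 — 2 statements merged into one kernel-verified Lean document; each statement's English description precedes it below -/
import Mathlib

section
/- For every nonnegative integer n: ∑_{k=0}^{n} (−n)_k(−1/2−n)_k/[(1)_k(−4n−2)_k] · (4/3)^k = (3/4)^{2n+1} · (2/3)_{2n+1}/(1/2)_{2n+1}. -/
open Finset Polynomial

noncomputable def wzF (n k : ℕ) : ℚ :=
  (ascPochhammer ℚ k).eval (-(n : ℚ)) * (ascPochhammer ℚ k).eval (-1 / 2 - (n : ℚ)) /
      ((ascPochhammer ℚ k).eval 1 * (ascPochhammer ℚ k).eval (-(4 * n : ℚ) - 2)) *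
      (4 / 3 : ℚ) ^ k

noncomputable def wzRhs (n : ℕ) : ℚ :=
  (3 / 4 : ℚ) ^ (2 * n + 1) *
    ((ascPochhammer ℚ (2 * n + 1)).eval (2 / 3) / (ascPochhammer ℚ (2 * n + 1)).eval (1 / 2))

def qpoly (x k : ℚ) : ℚ :=
  (3/8) * k * (k^3 - 28*k^2 + 119*k - 132 - 24*x*k^2 + 230*x*k - 386*x
    + 108*x^2*k - 364*x^2 - 112*x^3)

noncomputable def wzG (n k : ℕ) : ℚ :=
  qpoly n k * (ascPochhammer ℚ (k-1)).eval (-(n : ℚ)) *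
      (ascPochhammer ℚ (k-1)).eval (-1 / 2 - (n : ℚ)) /
      ((ascPochhammer ℚ k).eval 1 * (ascPochhammer ℚ k).eval (-(4 * n : ℚ) - 2)) *
      (4 / 3 : ℚ) ^ k

lemma poch_eval_prod (k : ℕ) (x : ℚ) :
    (ascPochhammer ℚ k).eval x = ∏ i ∈ range k, (x + i) := by
  induction k with
  | zero => simp
  | succ m ih => rw [ascPochhammer_succ_eval, ih, prod_range_succ]

lemma poch_ne_zero {k : ℕ} {x : ℚ} (h : ∀ i, i < k → x + i ≠ 0) :
    (ascPochhammer ℚ k).eval x ≠ 0 := by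
  rw [poch_eval_prod]
  exact Finset.prod_ne_zero_iff.2 fun i hi => h i (mem_range.1 hi)

lemma poch_eval_neg_self (m : ℕ) : (ascPochhammer ℚ (m+1)).eval (-(m : ℚ)) = 0 := by
  rw [poch_eval_prod]
  exact Finset.prod_eq_zero (self_mem_range_succ m) (by ring)

lemma poch_succ_left_eval (k : ℕ) (x : ℚ) :
    (ascPochhammer ℚ (k+1)).eval x = x * (ascPochhammer ℚ k).eval (x+1) := by
  rw [ascPochhammer_succ_left, Polynomial.X_mul, Polynomial.eval_mul_X, Polynomial.eval_comp]
  simp [mul_comm]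

lemma poch_add_eval (a b : ℕ) (x : ℚ) :
    (ascPochhammer ℚ (a+b)).eval x
      = (ascPochhammer ℚ a).eval x * (ascPochhammer ℚ b).eval (x + a) := by
  rw [← ascPochhammer_mul, Polynomial.eval_mul, Polynomial.eval_comp]
  simp

lemma poch_four_eval (y : ℚ) :
    (ascPochhammer ℚ 4).eval y = y * (y+1) * (y+2) * (y+3) := by
  rw [show (4:ℕ) = 3+1 from rfl, ascPochhammer_succ_eval,
      show (3:ℕ) = 2+1 from rfl, ascPochhammer_succ_eval,
      show (2:ℕ) = 1+1 from rfl, ascPochhammer_succ_eval, ascPochhammer_one]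
  push_cast
  simp

lemma poch_two_eval (y : ℚ) :
    (ascPochhammer ℚ 2).eval y = y * (y+1) := by
  rw [show (2:ℕ) = 1+1 from rfl, ascPochhammer_succ_eval, ascPochhammer_one]
  push_cast
  simp

set_option maxHeartbeats 4000000 in
lemma key_rat (x y a b c d w : ℚ) (hc : c ≠ 0) (hd : d ≠ 0)
    (h1 : y + 1 ≠ 0) (h2 : y + 2 ≠ 0)
    (h3 : y - 4*x - 2 ≠ 0) (h4 : y - 4*x - 1 ≠ 0)
    (h8 : -4*x-6 ≠ 0) (h9 : -4*x-5 ≠ 0) (h10 : -4*x-4 ≠ 0) (h11 : -4*x-3 ≠ 0) :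
    2*(4*x+3)*(4*x+5) * (((-x-1)*a) * ((-3/2-x)*b) * ((y-4*x-5)*(y-4*x-4)*(y-4*x-3)) /
        ((c*(y+1)) * ((-4*x-6)*(-4*x-5)*(-4*x-4)*(-4*x-3)*d)) * (w*(4/3)))
      - (6*x+5)*(3*x+4) * (a*(y-x) * (b*(y-x-1/2)) /
          ((c*(y+1)) * (d*(y-4*x-2))) * (w*(4/3)))
      = qpoly x (y+2) * (a*(y-x)) * (b*(y-x-1/2)) /
          ((c*(y+1)*(y+2)) * (d*(y-4*x-2)*(y-4*x-1))) * (w*(4/3)*(4/3))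
        - qpoly x (y+1) * a * b / ((c*(y+1)) * (d*(y-4*x-2))) * (w*(4/3)) := by
  have hD1 : (c*(y+1)) * ((-4*x-6)*(-4*x-5)*(-4*x-4)*(-4*x-3)*d) ≠ 0 := by
    exact mul_ne_zero (mul_ne_zero hc h1)
      (mul_ne_zero (mul_ne_zero (mul_ne_zero (mul_ne_zero h8 h9) h10) h11) hd)
  have hD2 : (c*(y+1)) * (d*(y-4*x-2)) ≠ 0 :=
    mul_ne_zero (mul_ne_zero hc h1) (mul_ne_zero hd h3)
  have hD3 : (c*(y+1)*(y+2)) * (d*(y-4*x-2)*(y-4*x-1)) ≠ 0 :=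
    mul_ne_zero (mul_ne_zero (mul_ne_zero hc h1) h2)
      (mul_ne_zero (mul_ne_zero hd h3) h4)
  simp only [div_mul_eq_mul_div, ← mul_div_assoc, div_div]
  rw [div_sub_div _ _ (mul_ne_zero hD1 three_ne_zero) (mul_ne_zero hD2 three_ne_zero),
    div_sub_div _ _ (mul_ne_zero hD3 (by norm_num : (3*3:ℚ) ≠ 0)) (mul_ne_zero hD2 three_ne_zero),
    div_eq_div_iff (mul_ne_zero (mul_ne_zero hD1 three_ne_zero) (mul_ne_zero hD2 three_ne_zero))
      (mul_ne_zero (mul_ne_zero hD3 (by norm_num : (3*3:ℚ) ≠ 0))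
        (mul_ne_zero hD2 three_ne_zero))]
  unfold qpoly
  ring

set_option maxHeartbeats 4000000 in
lemma key_succ (n j : ℕ) (hj : j ≤ n) :
    2*(4*(n:ℚ)+3)*(4*(n:ℚ)+5) * wzF (n+1) (j+1) - (6*(n:ℚ)+5)*(3*(n:ℚ)+4) * wzF n (j+1)
      = wzG n (j+1+1) - wzG n (j+1) := by
  have hn0 : (0:ℚ) ≤ (n:ℚ) := Nat.cast_nonneg n
  have hjn : (j:ℚ) ≤ (n:ℚ) := by exact_mod_cast hj
  have hC : (ascPochhammer ℚ j).eval (1:ℚ) ≠ 0 := (ascPochhammer_pos j 1 one_pos).ne'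
  have hD : (ascPochhammer ℚ j).eval (-(4*(n:ℚ))-2) ≠ 0 := by
    apply poch_ne_zero
    intro i hi hz
    have hij : (i:ℚ) < (j:ℚ) := by exact_mod_cast hi
    linarith
  have hE : (ascPochhammer ℚ (j+1)).eval (-(4*(n:ℚ))-6) ≠ 0 := by
    apply poch_ne_zero
    intro i hi hz
    have hij : (i:ℚ) < (j:ℚ)+1 := by exact_mod_cast hi
    linarith
  have h1 : (j:ℚ) + 1 ≠ 0 := by positivity
  have h2 : (j:ℚ) + 2 ≠ 0 := by positivity
  have h3 : (j:ℚ) - 4*(n:ℚ) - 2 ≠ 0 := by intro h; linarith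
  have h4 : (j:ℚ) - 4*(n:ℚ) - 1 ≠ 0 := by intro h; linarith
  have h8 : -4*(n:ℚ)-6 ≠ 0 := by intro h; linarith
  have h9 : -4*(n:ℚ)-5 ≠ 0 := by intro h; linarith
  have h10 : -4*(n:ℚ)-4 ≠ 0 := by intro h; linarith
  have h11 : -4*(n:ℚ)-3 ≠ 0 := by intro h; linarith
  -- the pochhammer contiguity relation for the denominator parameter
  have hA := poch_add_eval (j+1) 4 (-(4*(n:ℚ))-6)
  have hB := poch_add_eval 4 (j+1) (-(4*(n:ℚ))-6)
  rw [show 4+(j+1) = (j+1)+4 from by omega] at hB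
  have he1 := hA.symm.trans hB
  rw [poch_four_eval, poch_four_eval,
    show (-(4*(n:ℚ))-6 + ((4:ℕ):ℚ)) = -(4*(n:ℚ))-2 by push_cast; ring,
    show (-(4*(n:ℚ))-6 + ((j+1:ℕ):ℚ)) = (j:ℚ)-4*(n:ℚ)-5 by push_cast; ring,
    ascPochhammer_succ_eval j (-(4*(n:ℚ))-2)] at he1
  have he3 : (ascPochhammer ℚ (j+1)).eval (-(4*(n:ℚ))-6) *
      (((j:ℚ)-4*(n:ℚ)-5)*((j:ℚ)-4*(n:ℚ)-4)*((j:ℚ)-4*(n:ℚ)-3))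
      = ((-4*(n:ℚ)-6)*(-4*(n:ℚ)-5)*(-4*(n:ℚ)-4)*(-4*(n:ℚ)-3)) *
        (ascPochhammer ℚ j).eval (-(4*(n:ℚ))-2) := by
    apply mul_right_cancel₀ h3
    linear_combination he1
  have c1 : (ascPochhammer ℚ (j+1)).eval (-((n+1:ℕ):ℚ))
      = (-(n:ℚ)-1) * (ascPochhammer ℚ j).eval (-(n:ℚ)) := by
    rw [poch_succ_left_eval,
      show (-((n+1:ℕ):ℚ) + 1) = -(n:ℚ) by push_cast; ring,
      show (-((n+1:ℕ):ℚ)) = -(n:ℚ)-1 by push_cast; ring]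
  have c2 : (ascPochhammer ℚ (j+1)).eval (-1/2 - ((n+1:ℕ):ℚ))
      = (-3/2-(n:ℚ)) * (ascPochhammer ℚ j).eval (-1/2 - (n:ℚ)) := by
    rw [poch_succ_left_eval,
      show (-1/2 - ((n+1:ℕ):ℚ) + 1 : ℚ) = -1/2 - (n:ℚ) by push_cast; ring,
      show (-1/2 - ((n+1:ℕ):ℚ) : ℚ) = -3/2-(n:ℚ) by push_cast; ring]
  have c3 : (ascPochhammer ℚ (j+1)).eval (1:ℚ)
      = (ascPochhammer ℚ j).eval (1:ℚ) * ((j:ℚ)+1) := by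
    rw [ascPochhammer_succ_eval, show ((1:ℚ) + (j:ℚ)) = (j:ℚ)+1 by ring]
  have hf1 : wzF (n+1) (j+1) =
      ((-(n:ℚ)-1) * (ascPochhammer ℚ j).eval (-(n:ℚ))) *
        ((-3/2-(n:ℚ)) * (ascPochhammer ℚ j).eval (-1/2 - (n:ℚ))) *
        (((j:ℚ)-4*(n:ℚ)-5)*((j:ℚ)-4*(n:ℚ)-4)*((j:ℚ)-4*(n:ℚ)-3)) /
        (((ascPochhammer ℚ j).eval (1:ℚ) * ((j:ℚ)+1)) *
          ((-4*(n:ℚ)-6)*(-4*(n:ℚ)-5)*(-4*(n:ℚ)-4)*(-4*(n:ℚ)-3) *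
            (ascPochhammer ℚ j).eval (-(4*(n:ℚ))-2))) *
        ((4/3:ℚ)^j * (4/3)) := by
    simp only [wzF]
    rw [show (-(4 * ((n+1:ℕ):ℚ)) - 2) = -(4*(n:ℚ))-6 by push_cast; ring, c1, c2, c3, pow_succ]
    have hden1 : ((ascPochhammer ℚ j).eval (1:ℚ) * ((j:ℚ)+1)) *
        (ascPochhammer ℚ (j+1)).eval (-(4*(n:ℚ))-6) ≠ 0 :=
      mul_ne_zero (mul_ne_zero hC h1) hE
    have hden2 : ((ascPochhammer ℚ j).eval (1:ℚ) * ((j:ℚ)+1)) *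
        ((-4*(n:ℚ)-6)*(-4*(n:ℚ)-5)*(-4*(n:ℚ)-4)*(-4*(n:ℚ)-3) *
          (ascPochhammer ℚ j).eval (-(4*(n:ℚ))-2)) ≠ 0 :=
      mul_ne_zero (mul_ne_zero hC h1)
        (mul_ne_zero (mul_ne_zero (mul_ne_zero (mul_ne_zero h8 h9) h10) h11) hD)
    have base : ((-(n:ℚ)-1) * (ascPochhammer ℚ j).eval (-(n:ℚ))) *
          ((-3/2-(n:ℚ)) * (ascPochhammer ℚ j).eval (-1/2 - (n:ℚ))) /
          (((ascPochhammer ℚ j).eval (1:ℚ) * ((j:ℚ)+1)) *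
            (ascPochhammer ℚ (j+1)).eval (-(4*(n:ℚ))-6))
        = ((-(n:ℚ)-1) * (ascPochhammer ℚ j).eval (-(n:ℚ))) *
            ((-3/2-(n:ℚ)) * (ascPochhammer ℚ j).eval (-1/2 - (n:ℚ))) *
            (((j:ℚ)-4*(n:ℚ)-5)*((j:ℚ)-4*(n:ℚ)-4)*((j:ℚ)-4*(n:ℚ)-3)) /
          (((ascPochhammer ℚ j).eval (1:ℚ) * ((j:ℚ)+1)) *
            ((-4*(n:ℚ)-6)*(-4*(n:ℚ)-5)*(-4*(n:ℚ)-4)*(-4*(n:ℚ)-3) *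
              (ascPochhammer ℚ j).eval (-(4*(n:ℚ))-2))) := by
      rw [div_eq_div_iff hden1 hden2]
      linear_combination (-(((-(n:ℚ)-1) * (ascPochhammer ℚ j).eval (-(n:ℚ))) *
        ((-3/2-(n:ℚ)) * (ascPochhammer ℚ j).eval (-1/2 - (n:ℚ))) *
        ((ascPochhammer ℚ j).eval (1:ℚ) * ((j:ℚ)+1)))) * he3
    rw [base]
  rw [hf1]
  simp only [wzF, wzG, Nat.add_sub_cancel]
  simp only [ascPochhammer_succ_eval, pow_succ]
  push_cast
  have K := key_rat (n:ℚ) (j:ℚ) ((ascPochhammer ℚ j).eval (-(n:ℚ)))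
    ((ascPochhammer ℚ j).eval (-1/2 - (n:ℚ))) ((ascPochhammer ℚ j).eval (1:ℚ))
    ((ascPochhammer ℚ j).eval (-(4*(n:ℚ))-2)) ((4/3:ℚ)^j)
    hC hD h1 h2 h3 h4 h8 h9 h10 h11
  unfold qpoly at K ⊢
  linear_combination K

lemma key0 (n : ℕ) :
    2*(4*(n:ℚ)+3)*(4*(n:ℚ)+5) * wzF (n+1) 0 - (6*(n:ℚ)+5)*(3*(n:ℚ)+4) * wzF n 0
      = wzG n (0+1) - wzG n 0 := by
  have hd : -(4*(n:ℚ)) - 2 ≠ 0 := by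
    have : (0:ℚ) ≤ (n:ℚ) := Nat.cast_nonneg n
    intro h; linarith
  simp only [wzF, wzG, zero_add, ascPochhammer_zero, ascPochhammer_one, Polynomial.eval_one,
    Polynomial.eval_X, pow_zero, pow_one, Nat.sub_self]
  unfold qpoly
  field_simp
  ring

lemma ftop (n : ℕ) : wzF n (n+1) = 0 := by
  simp [wzF, poch_eval_neg_self]

lemma gzero (n : ℕ) : wzG n 0 = 0 := by
  simp [wzG, qpoly]

lemma gtop (n : ℕ) : wzG n (n+2) = 0 := by
  have h : n + 2 - 1 = n + 1 := by omega
  simp [wzG, h, poch_eval_neg_self]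

lemma sum_step (n : ℕ) :
    2*(4*(n:ℚ)+3)*(4*(n:ℚ)+5) * (∑ k ∈ range (n+1+1), wzF (n+1) k)
      = (6*(n:ℚ)+5)*(3*(n:ℚ)+4) * (∑ k ∈ range (n+1), wzF n k) := by
  have tele := Finset.sum_range_sub (wzG n) (n+2)
  have hsum : ∑ k ∈ range (n+2),
      (2*(4*(n:ℚ)+3)*(4*(n:ℚ)+5) * wzF (n+1) k - (6*(n:ℚ)+5)*(3*(n:ℚ)+4) * wzF n k)
      = wzG n (n+2) - wzG n 0 := by
    rw [← tele]
    apply Finset.sum_congr rfl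
    intro k hk
    rcases k with _ | j
    · exact key0 n
    · exact key_succ n j (by have := Finset.mem_range.1 hk; omega)
  rw [gtop, gzero, sub_zero] at hsum
  rw [Finset.sum_sub_distrib, ← Finset.mul_sum, ← Finset.mul_sum] at hsum
  have h2 : ∑ k ∈ range (n+2), wzF n k = ∑ k ∈ range (n+1), wzF n k := by
    rw [Finset.sum_range_succ, ftop n, add_zero]
  rw [h2] at hsum
  linarith [hsum]

lemma rhs_step (n : ℕ) :
    2*(4*(n:ℚ)+3)*(4*(n:ℚ)+5) * wzRhs (n+1) = (6*(n:ℚ)+5)*(3*(n:ℚ)+4) * wzRhs n := by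
  unfold wzRhs
  rw [show 2*(n+1)+1 = (2*n+1)+2 from by omega,
    poch_add_eval (2*n+1) 2 (2/3), poch_add_eval (2*n+1) 2 (1/2),
    poch_two_eval, poch_two_eval, pow_succ, pow_succ]
  have hpos : (0:ℚ) < (ascPochhammer ℚ (2*n+1)).eval (1/2) :=
    ascPochhammer_pos _ _ (by norm_num)
  have h1 : (1/2 + ((2*n+1:ℕ):ℚ)) ≠ 0 := by positivity
  have h2 : (1/2 + ((2*n+1:ℕ):ℚ) + 1) ≠ 0 := by positivity
  field_simp
  push_cast
  ring

lemma wz_main (n : ℕ) : ∑ k ∈ range (n+1), wzF n k = wzRhs n := by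
  induction n with
  | zero =>
    simp [wzF, wzRhs, ascPochhammer_one]
    norm_num
  | succ m ih =>
    have hne : (2*(4*(m:ℚ)+3)*(4*(m:ℚ)+5)) ≠ 0 := by positivity
    apply mul_left_cancel₀ hne
    rw [sum_step m, ih, rhs_step m]

theorem strange_identity_48b (n : ℕ) :
    ∑ k ∈ Finset.range (n + 1),
      (ascPochhammer ℚ k).eval (-(n : ℚ)) * (ascPochhammer ℚ k).eval (-1 / 2 - (n : ℚ)) /
        ((ascPochhammer ℚ k).eval 1 * (ascPochhammer ℚ k).eval (-(4 * n : ℚ) - 2)) *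
        (4 / 3 : ℚ) ^ k
      = (3 / 4 : ℚ) ^ (2 * n + 1) *
          ((ascPochhammer ℚ (2 * n + 1)).eval (2 / 3) /
            (ascPochhammer ℚ (2 * n + 1)).eval (1 / 2)) := by
  exact wz_main n
end

section
/- For every positive integer n: ∑_{k=0}^{n} (−n)_k(1/2−n)_k/[(1)_k(−4n)_k] · (8/9)^k = Γ(1/2)Γ(3n)/(3^{2n−1}·Γ(2n+1/2)·Γ(n)). -/
open Finset

noncomputable def cc (k m : ℕ) : ℝ :=
  (-2:ℝ)^k * 9^m * (Nat.factorial (3*k+4*m)) / ((Nat.factorial (2*m)) * (Nat.factorial k))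

noncomputable def gg (n j : ℕ) : ℝ :=
  if j ≤ n+1 then
    (-2:ℝ)^j * 9^(n+1-j) * (j:ℝ) *
      (9*(j:ℝ)^2 + 9*(4*(n:ℝ)+3)*(j:ℝ) - (72*(n:ℝ)^2+108*(n:ℝ)+42)) *
      (Nat.factorial (4*n+1-j)) / ((Nat.factorial (2*n+2-2*j)) * (Nat.factorial j))
  else 0

lemma fac_ne (m : ℕ) : ((Nat.factorial m : ℝ)) ≠ 0 := by
  exact_mod_cast Nat.factorial_ne_zero m

lemma wz_step (n j : ℕ) (hj : j ≤ n + 1) :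
    cc j (n+1-j) - 48*(3*(n:ℝ)+1)*(3*(n:ℝ)+2) * (if j ≤ n then cc j (n-j) else 0)
      = gg n (j+1) - gg n j := by
  rcases Nat.lt_or_ge j (n+1) with h | h
  · -- j ≤ n case
    have hjn : j ≤ n := Nat.lt_succ_iff.mp h
    obtain ⟨m, hm⟩ : ∃ m, n = j + m := ⟨n - j, by omega⟩
    subst hm
    rw [if_pos hjn]
    have e1 : j + m + 1 - j = m + 1 := by omega
    have e2 : j + m - j = m := by omega
    rw [e1, e2]
    unfold gg
    rw [if_pos (by omega : j ≤ j + m + 1), if_pos (by omega : j + 1 ≤ j + m + 1)]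
    have e3 : (j+m)+1 - j = m + 1 := by omega
    have e4 : (j+m)+1 - (j+1) = m := by omega
    have e5 : 4*(j+m)+1 - j = 3*j+4*m+1 := by omega
    have e6 : 4*(j+m)+1 - (j+1) = 3*j+4*m := by omega
    have e7 : 2*(j+m)+2 - 2*j = 2*m+2 := by omega
    have e8 : 2*(j+m)+2 - 2*(j+1) = 2*m := by omega
    rw [e3, e4, e5, e6, e7, e8]
    unfold cc
    have f1 : (Nat.factorial (3*j+4*(m+1)) : ℝ)
        = ((3*j+4*m+4) * (3*j+4*m+3) * (3*j+4*m+2) * (3*j+4*m+1)) * Nat.factorial (3*j+4*m) := by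
      have : 3*j+4*(m+1) = (3*j+4*m+4) := by omega
      rw [this]
      push_cast [Nat.factorial_succ]
      ring
    have f2 : (Nat.factorial (3*j+4*m+1) : ℝ) = (3*j+4*m+1) * Nat.factorial (3*j+4*m) := by
      push_cast [Nat.factorial_succ]; ring
    have f3 : (Nat.factorial (2*(m+1)) : ℝ) = ((2*m+2)*(2*m+1)) * Nat.factorial (2*m) := by
      have : 2*(m+1) = (2*m+2) := by omega
      rw [this]
      push_cast [Nat.factorial_succ]; ring
    have f4 : (Nat.factorial (2*m+2) : ℝ) = ((2*m+2)*(2*m+1)) * Nat.factorial (2*m) := by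
      push_cast [Nat.factorial_succ]; ring
    have f5 : (Nat.factorial (j+1) : ℝ) = (j+1) * Nat.factorial j := by
      push_cast [Nat.factorial_succ]; ring
    rw [f1, f2, f3, f4, f5]
    have h9 : ((9:ℝ))^(m+1) = 9 * 9^m := by ring
    have hp : ((-2:ℝ))^(j+1) = (-2) * (-2)^j := by ring
    rw [h9, hp]
    push_cast
    field_simp
    ring
  · -- j = n+1 case
    have hj1 : j = n + 1 := by omega
    subst hj1
    rw [if_neg (by omega)]
    unfold gg
    rw [if_neg (by omega : ¬ (n+1+1 ≤ n+1)), if_pos (le_refl (n+1))]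
    have e1 : n + 1 - (n+1) = 0 := by omega
    have e2 : 4*n+1 - (n+1) = 3*n := by omega
    have e3 : 2*n+2 - 2*(n+1) = 0 := by omega
    rw [e1, e2, e3]
    unfold cc
    have f1 : (Nat.factorial (3*(n+1)+4*0) : ℝ)
        = ((3*n+3)*(3*n+2)*(3*n+1)) * Nat.factorial (3*n) := by
      have : 3*(n+1)+4*0 = 3*n+3 := by omega
      rw [this]
      push_cast [Nat.factorial_succ]; ring
    rw [f1]
    simp only [Nat.factorial_zero, pow_zero]
    push_cast
    field_simp
    ring

lemma gg_zero (n : ℕ) : gg n 0 = 0 := by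
  unfold gg
  rw [if_pos (by omega : (0:ℕ) ≤ n+1)]
  norm_num

lemma gg_top (n : ℕ) : gg n (n+2) = 0 := by
  unfold gg
  rw [if_neg (by omega)]

noncomputable def S (n : ℕ) : ℝ := ∑ j ∈ Finset.range (n+1), cc j (n-j)

lemma S_rec (n : ℕ) : S (n+1) = 48*(3*(n:ℝ)+1)*(3*(n:ℝ)+2) * S n := by
  have key : ∑ j ∈ Finset.range (n+2),
      (cc j (n+1-j) - 48*(3*(n:ℝ)+1)*(3*(n:ℝ)+2) * (if j ≤ n then cc j (n-j) else 0)) = 0 := by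
    calc ∑ j ∈ Finset.range (n+2),
        (cc j (n+1-j) - 48*(3*(n:ℝ)+1)*(3*(n:ℝ)+2) * (if j ≤ n then cc j (n-j) else 0))
        = ∑ j ∈ Finset.range (n+2), (gg n (j+1) - gg n j) := by
          refine Finset.sum_congr rfl fun j hj => ?_
          exact wz_step n j (by simpa [Nat.lt_succ_iff] using Finset.mem_range.mp hj)
      _ = gg n (n+2) - gg n 0 := Finset.sum_range_sub (gg n) (n+2)
      _ = 0 := by rw [gg_zero, gg_top]; ring
  rw [Finset.sum_sub_distrib] at key
  have h1 : ∑ j ∈ Finset.range (n+2), cc j (n+1-j) = S (n+1) := rfl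
  have h2 : ∑ j ∈ Finset.range (n+2),
      48*(3*(n:ℝ)+1)*(3*(n:ℝ)+2) * (if j ≤ n then cc j (n-j) else 0)
      = 48*(3*(n:ℝ)+1)*(3*(n:ℝ)+2) * S n := by
    rw [← Finset.mul_sum]
    congr 1
    rw [Finset.sum_range_succ, if_neg (by omega)]
    rw [add_zero]
    refine Finset.sum_congr rfl fun j hj => ?_
    rw [if_pos (Nat.lt_succ_iff.mp (Finset.mem_range.mp hj))]
  rw [h1, h2] at key
  linarith

lemma S_closed (n : ℕ) : S n = 16^n * (Nat.factorial (3*n)) / (Nat.factorial n) := by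
  induction n with
  | zero => simp [S, cc]
  | succ n ih =>
    rw [S_rec, ih]
    have f1 : (Nat.factorial (3*(n+1)) : ℝ)
        = ((3*n+3)*(3*n+2)*(3*n+1)) * Nat.factorial (3*n) := by
      have : 3*(n+1) = 3*n+3 := by omega
      rw [this]; push_cast [Nat.factorial_succ]; ring
    have f2 : (Nat.factorial (n+1) : ℝ) = (n+1) * Nat.factorial n := by
      push_cast [Nat.factorial_succ]; ring
    rw [f1, f2]
    have h16 : ((16:ℝ))^(n+1) = 16 * 16^n := by ring
    rw [h16]
    have := fac_ne n
    have := fac_ne (3*n)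
    field_simp
    ring

lemma poch_neg (N : ℕ) : ∀ k ≤ N,
    (ascPochhammer ℝ k).eval (-(N:ℝ))
      = (-1)^k * (Nat.factorial N) / (Nat.factorial (N-k)) := by
  intro k
  induction k with
  | zero => intro _; simp [div_self (fac_ne N)]
  | succ k ih =>
    intro hk
    have hk' : k ≤ N := by omega
    rw [ascPochhammer_succ_eval, ih hk']
    obtain ⟨a, ha⟩ : ∃ a, N - (k+1) = a := ⟨_, rfl⟩
    have hNk : N - k = a + 1 := by omega
    rw [hNk, ha]
    have e1 : (-(N:ℝ) + k) = -((a:ℝ)+1) := by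
      have : (N:ℝ) = k + (a+1) := by
        have : N = k + (a+1) := by omega
        exact_mod_cast congrArg (Nat.cast : ℕ → ℝ) this
      rw [this]; ring
    rw [e1]
    have f1 : (Nat.factorial (a+1) : ℝ) = ((a:ℝ)+1) * Nat.factorial a := by
      push_cast [Nat.factorial_succ]; ring
    rw [f1]
    have := fac_ne a
    have ha1 : ((a:ℝ)+1) ≠ 0 := by positivity
    field_simp
    ring

lemma poch_half (N : ℕ) : ∀ k ≤ N,
    (ascPochhammer ℝ k).eval (1/2 - (N:ℝ))
      = (-1)^k * (Nat.factorial (2*N)) * (Nat.factorial (N-k)) /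
          (4^k * (Nat.factorial (2*N-2*k)) * (Nat.factorial N)) := by
  intro k
  induction k with
  | zero =>
    intro _
    have : 2*N - 2*0 = 2*N := by omega
    simp [this, div_self (mul_ne_zero (fac_ne (2*N)) (fac_ne N))]
  | succ k ih =>
    intro hk
    have hk' : k ≤ N := by omega
    rw [ascPochhammer_succ_eval, ih hk']
    obtain ⟨a, ha⟩ : ∃ a, N - (k+1) = a := ⟨_, rfl⟩
    have hNk : N - k = a + 1 := by omega
    have h2Nk : 2*N - 2*k = 2*a + 2 := by omega
    have h2Nk1 : 2*N - 2*(k+1) = 2*a := by omega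
    rw [hNk, h2Nk, ha, h2Nk1]
    have e1 : (1/2 - (N:ℝ) + k) = -(2*(a:ℝ)+1)/2 := by
      have : (N:ℝ) = k + (a+1) := by
        have : N = k + (a+1) := by omega
        exact_mod_cast congrArg (Nat.cast : ℕ → ℝ) this
      rw [this]; ring
    rw [e1]
    have f1 : (Nat.factorial (a+1) : ℝ) = ((a:ℝ)+1) * Nat.factorial a := by
      push_cast [Nat.factorial_succ]; ring
    have f2 : (Nat.factorial (2*a+2) : ℝ) = ((2*(a:ℝ)+2)*(2*(a:ℝ)+1)) * Nat.factorial (2*a) := by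
      push_cast [Nat.factorial_succ]; ring
    rw [f1, f2]
    have := fac_ne a
    have := fac_ne (2*a)
    have := fac_ne N
    have := fac_ne (2*N)
    have h4 : ((4:ℝ))^(k+1) = 4 * 4^k := by ring
    rw [h4]
    have h4k : ((4:ℝ))^k ≠ 0 := by positivity
    have ha1 : ((a:ℝ)+1) ≠ 0 := by positivity
    have ha2 : (2*(a:ℝ)+1) ≠ 0 := by positivity
    have ha3 : (2*(a:ℝ)+2) ≠ 0 := by positivity
    field_simp
    ring

lemma gamma_half (m : ℕ) :
    Real.Gamma ((m:ℝ) + 1/2)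
      = Real.sqrt Real.pi * (Nat.factorial (2*m)) / (4^m * (Nat.factorial m)) := by
  induction m with
  | zero => norm_num [Real.Gamma_one_half_eq]
  | succ m ih =>
    have key : (((m:ℕ)+1 : ℕ):ℝ) + 1/2 = ((m:ℝ) + 1/2) + 1 := by push_cast; ring
    have hne : ((m:ℝ) + 1/2) ≠ 0 := by positivity
    rw [key, Real.Gamma_add_one hne, ih]
    have f1 : (Nat.factorial (2*(m+1)) : ℝ)
        = ((2*(m:ℝ)+2)*(2*(m:ℝ)+1)) * Nat.factorial (2*m) := by
      have : 2*(m+1) = 2*m+2 := by omega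
      rw [this]; push_cast [Nat.factorial_succ]; ring
    have f2 : (Nat.factorial (m+1) : ℝ) = ((m:ℝ)+1) * Nat.factorial m := by
      push_cast [Nat.factorial_succ]; ring
    rw [f1, f2]
    have := fac_ne m
    have := fac_ne (2*m)
    have h4 : ((4:ℝ))^(m+1) = 4 * 4^m := by ring
    rw [h4]
    have h4m : ((4:ℝ))^m ≠ 0 := by positivity
    have hm1 : ((m:ℝ)+1) ≠ 0 := by positivity
    field_simp
    ring

lemma summand (n k : ℕ) (hk : k ≤ n) :
    (ascPochhammer ℝ k).eval (-(n : ℝ)) * (ascPochhammer ℝ k).eval (1 / 2 - (n : ℝ)) /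
        ((ascPochhammer ℝ k).eval 1 * (ascPochhammer ℝ k).eval (-(4 * n : ℝ))) *
        (8 / 9 : ℝ) ^ k
      = (Nat.factorial (2*n)) / ((Nat.factorial (4*n)) * 9^n) * cc k (n-k) := by
  have h4 : -(4 * (n:ℝ)) = -(((4*n : ℕ)):ℝ) := by push_cast; ring
  rw [h4, poch_neg n k hk, poch_half n k hk, poch_neg (4*n) k (by omega),
    ascPochhammer_eval_one]
  obtain ⟨a, ha⟩ : ∃ a, n = k + a := ⟨n - k, by omega⟩
  subst ha
  have e1 : k + a - k = a := by omega
  have e2 : 2*(k+a) - 2*k = 2*a := by omega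
  have e3 : 4*(k+a) - k = 3*k + 4*a := by omega
  rw [e1, e2, e3]
  unfold cc
  have h9 : ((9:ℝ))^(k+a) = 9^k * 9^a := by rw [pow_add]
  rw [h9]
  have := fac_ne k
  have := fac_ne a
  have := fac_ne (2*a)
  have := fac_ne (k+a)
  have := fac_ne (2*(k+a))
  have := fac_ne (4*(k+a))
  have := fac_ne (3*k+4*a)
  have h4k : ((4:ℝ))^k ≠ 0 := by positivity
  have h9k : ((9:ℝ))^k ≠ 0 := by positivity
  have h9a : ((9:ℝ))^a ≠ 0 := by positivity
  have h89 : ((8/9:ℝ))^k = 8^k / 9^k := by rw [div_pow]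
  have h8 : ((8:ℝ))^k = 4^k * 2^k := by rw [← mul_pow]; norm_num
  have hm1 : ((-1:ℝ))^k ≠ 0 := pow_ne_zero k (by norm_num)
  have hneg2 : ((-2:ℝ))^k = (-1)^k * 2^k := by rw [← mul_pow]; norm_num
  rw [h89, h8, hneg2]
  have h2k : ((2:ℝ))^k ≠ 0 := by positivity
  field_simp

theorem strange_identity_72a (n : ℕ) (hn : 0 < n) :
    ∑ k ∈ Finset.range (n + 1),
      (ascPochhammer ℝ k).eval (-(n : ℝ)) * (ascPochhammer ℝ k).eval (1 / 2 - (n : ℝ)) /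
        ((ascPochhammer ℝ k).eval 1 * (ascPochhammer ℝ k).eval (-(4 * n : ℝ))) *
        (8 / 9 : ℝ) ^ k
      = Real.Gamma (1 / 2) * Real.Gamma (3 * (n : ℝ)) /
          (3 ^ (2 * n - 1) * Real.Gamma (2 * (n : ℝ) + 1 / 2) * Real.Gamma (n : ℝ)) := by
  have hsum : ∑ k ∈ Finset.range (n + 1),
      (ascPochhammer ℝ k).eval (-(n : ℝ)) * (ascPochhammer ℝ k).eval (1 / 2 - (n : ℝ)) /
        ((ascPochhammer ℝ k).eval 1 * (ascPochhammer ℝ k).eval (-(4 * n : ℝ))) *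
        (8 / 9 : ℝ) ^ k
      = (Nat.factorial (2*n)) / ((Nat.factorial (4*n)) * 9^n) * S n := by
    rw [S, Finset.mul_sum]
    refine Finset.sum_congr rfl fun k hk => ?_
    exact summand n k (Nat.lt_succ_iff.mp (Finset.mem_range.mp hk))
  rw [hsum, S_closed]
  -- Gamma values
  have hg1 : Real.Gamma (1/2 : ℝ) = Real.sqrt Real.pi := Real.Gamma_one_half_eq
  have hg3 : Real.Gamma (3 * (n:ℝ)) = (Nat.factorial (3*n - 1)) := by
    have : 3 * (n:ℝ) = ((3*n - 1 : ℕ) : ℝ) + 1 := by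
      have : (3*n - 1 : ℕ) = 3*n - 1 := rfl
      push_cast [Nat.cast_sub (by omega : 1 ≤ 3*n)]
      ring
    rw [this, Real.Gamma_nat_eq_factorial]
  have hgn : Real.Gamma ((n:ℝ)) = (Nat.factorial (n - 1)) := by
    have : (n:ℝ) = ((n - 1 : ℕ) : ℝ) + 1 := by
      push_cast [Nat.cast_sub (by omega : 1 ≤ n)]
      ring
    rw [this, Real.Gamma_nat_eq_factorial]
  have hg2 : Real.Gamma (2 * (n:ℝ) + 1/2)
      = Real.sqrt Real.pi * (Nat.factorial (4*n)) / (4^(2*n) * (Nat.factorial (2*n))) := by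
    have : 2 * (n:ℝ) + 1/2 = ((2*n : ℕ):ℝ) + 1/2 := by push_cast; ring
    rw [this, gamma_half (2*n)]
    norm_num [show 2*(2*n) = 4*n from by omega]
  rw [hg1, hg3, hgn, hg2]
  -- factorial relations
  have f3 : (Nat.factorial (3*n) : ℝ) = (3*(n:ℝ)) * Nat.factorial (3*n-1) := by
    have h : 3*n = (3*n-1) + 1 := by omega
    rw [h, Nat.factorial_succ]
    push_cast [Nat.cast_sub (by omega : 1 ≤ 3*n)]
    ring
  have fn : (Nat.factorial n : ℝ) = ((n:ℝ)) * Nat.factorial (n-1) := by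
    have h : n = (n-1) + 1 := by omega
    nth_rewrite 1 [h]
    rw [Nat.factorial_succ]
    push_cast [Nat.cast_sub (by omega : 1 ≤ n)]
    ring
  have p3 : ((3:ℝ))^(2*n-1) * 3 = 9^n := by
    rw [← pow_succ]
    have : 2*n - 1 + 1 = 2*n := by omega
    rw [this, pow_mul]
    norm_num
  have p4 : ((4:ℝ))^(2*n) = 16^n := by rw [pow_mul]; norm_num
  rw [f3, fn, p4]
  have hsq : Real.sqrt Real.pi ≠ 0 := ne_of_gt (Real.sqrt_pos.mpr Real.pi_pos)
  have := fac_ne (2*n)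
  have := fac_ne (4*n)
  have := fac_ne (3*n-1)
  have := fac_ne (n-1)
  have h9n : ((9:ℝ))^n ≠ 0 := by positivity
  have h16n : ((16:ℝ))^n ≠ 0 := by positivity
  have h3p : ((3:ℝ))^(2*n-1) ≠ 0 := by positivity
  have hnn : ((n:ℝ)) ≠ 0 := by positivity
  have hp3' : ((3:ℝ))^(2*n-1) = 9^n / 3 := by
    rw [← p3]; ring
  rw [hp3']
  field_simp
end
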